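/- In the factor hyperfield H = ℚ/(ℚ×)², where (ℚ×)² is the group of nonzero rational squares, for any two positive rationals a and b lying in distinct square classes, the cosets of a and b are incomparable under the relation x̄ ≺ ȳ defined by ȳ ⊞ (-x̄) ⊆ H⁺, where H⁺ is the image of the positive rationals. -/

import Mathlib

/-- The data of a hyperfield: a multivalued addition, multiplication,
negation, zero and one. -/
structure HyperfieldData (H : Type*) where
  hadd : H → H → Set H
  mul : H → H → H
  neg : H → H
  zero : H
  one : H

/-- The hyperfield axioms. -/
structure IsHyperfield {H : Type*} (D : HyperfieldData H) : Prop where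
  hadd_nonempty : ∀ a b, (D.hadd a b).Nonempty
  hadd_comm : ∀ a b, D.hadd a b = D.hadd b a
  hadd_assoc : ∀ a b c, (⋃ x ∈ D.hadd a b, D.hadd x c) = ⋃ y ∈ D.hadd b c, D.hadd a y
  zero_hadd : ∀ a, D.hadd D.zero a = {a}
  neg_mem : ∀ a, D.zero ∈ D.hadd a (D.neg a)
  neg_unique : ∀ a b, D.zero ∈ D.hadd a b → b = D.neg a
  reverse : ∀ a b c, a ∈ D.hadd b c ↔ c ∈ D.hadd a (D.neg b)
  mul_comm : ∀ a b, D.mul a b = D.mul b a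
  mul_assoc : ∀ a b c, D.mul (D.mul a b) c = D.mul a (D.mul b c)
  one_mul : ∀ a, D.mul D.one a = a
  mul_inv : ∀ a, a ≠ D.zero → ∃ b, D.mul a b = D.one
  zero_mul : ∀ a, D.mul D.zero a = D.zero
  distrib : ∀ a b c, D.mul a '' D.hadd b c = D.hadd (D.mul a b) (D.mul a c)
  zero_ne_one : D.zero ≠ D.one

/-- An ordering on a hyperfield: a set of positive elements closed under
hyperaddition and multiplication such that `H = P ⊔ {0} ⊔ (-P)`. -/
def IsOrdering {H : Type*} (D : HyperfieldData H) (P : Set H) : Prop :=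
  (∀ a ∈ P, ∀ b ∈ P, D.hadd a b ⊆ P) ∧
  (∀ a ∈ P, ∀ b ∈ P, D.mul a b ∈ P) ∧
  (∀ x : H, x ∈ P ∨ x = D.zero ∨ x ∈ D.neg '' P) ∧
  D.zero ∉ P ∧ D.zero ∉ D.neg '' P ∧ Disjoint P (D.neg '' P)

/-- A hyperfield homomorphism. -/
def IsHom {H1 H2 : Type*} (D1 : HyperfieldData H1) (D2 : HyperfieldData H2)
    (f : H1 → H2) : Prop :=
  (∀ a b, f '' D1.hadd a b ⊆ D2.hadd (f a) (f b)) ∧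
  (∀ a b, f (D1.mul a b) = D2.mul (f a) (f b)) ∧
  f D1.one = D2.one ∧ f D1.zero = D2.zero

/-- The setoid on `F` whose classes are the cosets of the multiplicative
subgroup `U ⊆ Fˣ`. -/
def factorSetoid {F : Type*} [Field F] (U : Subgroup Fˣ) : Setoid F where
  r a b := ∃ u : Fˣ, u ∈ U ∧ b = a * u
  iseqv := ⟨fun a => ⟨1, U.one_mem, by simp⟩,
    fun {a b} h => by
      obtain ⟨u, hu, rfl⟩ := h
      exact ⟨u⁻¹, U.inv_mem hu, by rw [mul_assoc]; simp⟩,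
    fun {a b c} h1 h2 => by
      obtain ⟨u, hu, rfl⟩ := h1
      obtain ⟨v, hv, rfl⟩ := h2
      exact ⟨u * v, U.mul_mem hu hv, by rw [Units.val_mul, mul_assoc]⟩⟩

/-- The underlying set of the factor hyperfield `F/U`. -/
abbrev FQuot {F : Type*} [Field F] (U : Subgroup Fˣ) := Quotient (factorSetoid U)

/-- The quotient map `τ : F → F/U`. -/
def tauF {F : Type*} [Field F] (U : Subgroup Fˣ) : F → FQuot U :=
  Quotient.mk (factorSetoid U)

/-- The hyperfield data of the factor hyperfield `F/U`. -/
noncomputable def factorData {F : Type*} [Field F] (U : Subgroup Fˣ) :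
    HyperfieldData (FQuot U) where
  hadd x y := {z | ∃ a b : F, tauF U a = x ∧ tauF U b = y ∧ tauF U (a + b) = z}
  mul x y := tauF U (Quotient.out x * Quotient.out y)
  neg x := tauF U (-(Quotient.out x))
  zero := tauF U 0
  one := tauF U 1

/-- The subgroup of nonzero rational squares. -/
def Usq : Subgroup ℚˣ := (powMonoidHom 2 : ℚˣ →* ℚˣ).range

/-- in `H = ℚ/(ℚˣ)²`, any two positive rationals in distinct
square classes are incomparable under `x̄ ≺ ȳ ↔ ȳ ⊞ (-x̄) ⊆ H⁺`. -/
lemma tauF_eq_iff {F : Type*} [Field F] (U : Subgroup Fˣ) (x y : F) :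
    tauF U x = tauF U y ↔ ∃ u : Fˣ, u ∈ U ∧ y = x * u :=
  ⟨fun h => Quotient.exact h, fun h => Quotient.sound h⟩

lemma neg_tauF {F : Type*} [Field F] (U : Subgroup Fˣ) (a : F) :
    (factorData U).neg (tauF U a) = tauF U (-a) := by
  have h : tauF U a = tauF U (Quotient.out (tauF U a)) :=
    (Quotient.out_eq (tauF U a)).symm
  obtain ⟨u, hu, hout⟩ := (tauF_eq_iff U _ _).mp h
  show tauF U (-(Quotient.out (tauF U a))) = tauF U (-a)
  rw [hout]
  exact Quotient.sound ⟨u⁻¹, U.inv_mem hu, by rw [neg_mul, mul_assoc, Units.mul_inv, mul_one]⟩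

lemma tauF_neg_not_pos (q : ℚ) (hq : q < 0) :
    tauF Usq q ∉ tauF Usq '' {q : ℚ | 0 < q} := by
  rintro ⟨p, hp, hpq⟩
  obtain ⟨u, hu, hq'⟩ := (tauF_eq_iff Usq p q).mp hpq
  obtain ⟨v, hv⟩ := hu
  have : (u : ℚ) = (v : ℚ) ^ 2 := by rw [← hv]; rfl
  have hv0 : ((v:ℚˣ):ℚ) ≠ 0 := v.ne_zero
  have hvpos : (0:ℚ) < (v:ℚ)^2 := by positivity
  have hp' : 0 < p := hp
  nlinarith [hvpos, hp']

lemma key (a b : ℚ) (ha : 0 < a) (hb : 0 < b) :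
    ¬ ((factorData Usq).hadd (tauF Usq b) ((factorData Usq).neg (tauF Usq a)) ⊆
        tauF Usq '' {q : ℚ | 0 < q}) := by
  intro hsub
  obtain ⟨n, hn⟩ := exists_nat_gt (b / a)
  have hn0 : (0:ℚ) < n := lt_trans (by positivity) hn
  have hn1 : (1:ℚ) ≤ n := by
    exact_mod_cast Nat.one_le_iff_ne_zero.mpr (by exact_mod_cast hn0.ne')
  have hanb : b < a * (n:ℚ)^2 := by
    have h1 : b < a * n := by
      rw [div_lt_iff₀ ha] at hn; linarith [hn]
    nlinarith
  set c : ℚ := -a * (n:ℚ)^2 with hc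
  have hcn : tauF Usq c = tauF Usq (-a) := by
    refine Quotient.sound ⟨(Units.mk0 (n:ℚ) hn0.ne')⁻¹ ^ 2,
      ⟨(Units.mk0 (n:ℚ) hn0.ne')⁻¹, rfl⟩, ?_⟩
    have : (((Units.mk0 (n:ℚ) hn0.ne')⁻¹ ^ 2 : ℚˣ) : ℚ) = ((n:ℚ)^2)⁻¹ := by
      simp [Units.val_pow_eq_pow_val]
    rw [this, hc]
    field_simp
  have hmem : tauF Usq (b + c) ∈
      (factorData Usq).hadd (tauF Usq b) ((factorData Usq).neg (tauF Usq a)) := by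
    rw [neg_tauF]
    exact ⟨b, c, rfl, hcn, rfl⟩
  exact tauF_neg_not_pos (b + c) (by rw [hc]; nlinarith) (hsub hmem)

theorem stmt7 (a b : ℚ) (ha : 0 < a) (hb : 0 < b)
    (hne : tauF Usq a ≠ tauF Usq b) :
    ¬ ((factorData Usq).hadd (tauF Usq b) ((factorData Usq).neg (tauF Usq a)) ⊆
        tauF Usq '' {q : ℚ | 0 < q}) ∧
    ¬ ((factorData Usq).hadd (tauF Usq a) ((factorData Usq).neg (tauF Usq b)) ⊆
        tauF Usq '' {q : ℚ | 0 < q}) :=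
  ⟨key a b ha hb, key b a hb ha⟩
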